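/- Let (Ω, ν) be a finite measure space, H = L²(Ω; ℝ), and let A : H → H be a continuous self-adjoint linear operator. Let α, β > 0 and a ≤ 0 ≤ b be real numbers, and let y_d, y_r ∈ H. Define B_β = {λ ∈ H : |λ(x)| ≤ β for a.e. x}, σ(μ) = ∫_Ω max(a μ(x), b μ(x)) dν(x), and the dual objective Φ(λ, p, μ) = ½‖A p − y_d‖² + (1/(2α))‖p − λ − μ‖² + ⟨p, y_r⟩ + σ(μ) − ½‖y_d‖² for λ ∈ B_β (Φ = +∞ if λ ∉ B_β). Let t₁ = 1, t_{k+1} = (1 + √(1 + 4 t_k²))/2, β_k = (t_k − 1)/t_{k+1}. Given (λ⁰, p⁰, μ⁰) ∈ B_β × H × H with (λ̃¹, p̃¹, μ̃¹) = (λ⁰, p⁰, μ⁰), suppose the iterates satisfy: p̂^k is the unique minimizer over H of p ↦ ½‖A p − y_d‖² + (1/(2α))‖p − λ̃^k − μ̃^k‖² + ⟨p, y_r⟩; λ^k is the unique minimizer over B_β of λ ↦ (1/(2α))‖λ − (p̂^k − μ̃^k)‖²; p^k is the unique minimizer over H of p ↦ ½‖A p − y_d‖² + (1/(2α))‖p −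 λ^k − μ̃^k‖² + ⟨p, y_r⟩; μ^k is the unique minimizer over H of μ ↦ (1/(2α))‖μ − (p^k − λ^k)‖² + σ(μ); and (λ̃^{k+1}, p̃^{k+1}, μ̃^{k+1}) = (λ^k, p^k, μ^k) + β_k((λ^k, p^k, μ^k) − (λ^{k−1}, p^{k−1}, μ^{k−1})). If (λ*, p*, μ*) minimizes Φ, then for all k ≥ 1, Φ(λ^k, p^k, μ^k) − Φ(λ*, p*, μ*) ≤ 4τ/(k+1)², where τ = (1/(2α))⟨λ* − λ⁰, (α A² + I)⁻¹(λ* − λ⁰)⟩ + (1/(2α))‖μ* − μ⁰‖² (note α A² + I is boundedly invertible since A² is positive semidefinite). -/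

import Mathlib

open MeasureTheory
open scoped InnerProductSpace

/-- The dual objective `Φ(λ, p, μ)` of the sparse optimal-control problem, restricted to
`λ ∈ B_β` (outside, `Φ = +∞`, which is encoded by constraining all minimizations to
`B_β × H × H`). -/
noncomputable def dualObj {Ω : Type*} [MeasurableSpace Ω] (ν : Measure Ω)
    (A : Lp ℝ 2 ν →L[ℝ] Lp ℝ 2 ν) (α a b : ℝ) (yd yr : Lp ℝ 2 ν)
    (lam p mu : Lp ℝ 2 ν) : ℝ :=
  (1 / 2) * ‖A p - yd‖ ^ 2 + (1 / (2 * α)) * ‖p - lam - mu‖ ^ 2 + ⟪p, yr⟫_ℝ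
    + (∫ x, max (a * mu x) (b * mu x) ∂ν) - (1 / 2) * ‖yd‖ ^ 2


section AuxiliaryLemmas

lemma aux_lin_zero (L C : ℝ) (hC : 0 ≤ C) (h : ∀ s : ℝ, 0 ≤ s * L + s ^ 2 * C) : L = 0 := by
  have h1 := h (-(L / (C + 1)))
  have hC1 : (0:ℝ) < C + 1 := by linarith
  have h2 : (-(L / (C + 1))) * L + (-(L / (C + 1))) ^ 2 * C
      = -(L^2/(C+1)^2) * (C+1) + (L^2/(C+1)^2) * C := by
    field_simp
  rw [h2] at h1
  have h5 : L^2/(C+1)^2 ≤ 0 := by nlinarith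
  have h3 : 0 ≤ L^2/(C+1)^2 := by positivity
  have h4 : L^2 / (C+1)^2 = 0 := le_antisymm h5 h3
  rcases div_eq_zero_iff.mp h4 with h6 | h6
  · exact pow_eq_zero_iff (n := 2) (by norm_num) |>.mp h6
  · exact absurd h6 (by positivity)

lemma aux_seg_zero (X Y : ℝ) (hY : 0 ≤ Y) (h : ∀ s : ℝ, 0 < s → s ≤ 1 → 0 ≤ X + s * Y) :
    0 ≤ X := by
  by_contra hX
  push_neg at hX
  have hs0 : 0 < min 1 (-X / (Y + 1)) := by
    apply lt_min one_pos
    apply div_pos <;> linarith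
  have hs1 : min 1 (-X / (Y + 1)) ≤ 1 := min_le_left _ _
  have := h _ hs0 hs1
  have h2 : min 1 (-X / (Y + 1)) * Y ≤ (-X / (Y + 1)) * Y := by
    apply mul_le_mul_of_nonneg_right (min_le_right _ _) hY
  have h3 : (-X / (Y + 1)) * Y < -X := by
    rw [div_mul_eq_mul_div, div_lt_iff₀ (by linarith)]
    nlinarith
  linarith

variable {V : Type*} [NormedAddCommGroup V] [InnerProductSpace ℝ V]

omit [InnerProductSpace ℝ V] in
/-- the FISTA metric telescoping identity for a symmetric bilinear map. -/
lemma quad_id [Module ℝ V] (B : V → V → ℝ)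
    (hadd : ∀ x y z, B (x + y) z = B x z + B y z)
    (hsmul : ∀ (c : ℝ) (x y), B (c • x) y = c * B x y)
    (hsymm : ∀ x y, B x y = B y x)
    (t : ℝ) (u v c d : V) :
    t * ((t - 1) * (B (u - c) (u - c) - B (v - c) (v - c))
        + (B (u - d) (u - d) - B (v - d) (v - d)))
      = B (t • u - ((t-1) • c + d)) (t • u - ((t-1) • c + d))
        - B (t • v - ((t-1) • c + d)) (t • v - ((t-1) • c + d)) := by
  have haddr : ∀ x y z, B x (y + z) = B x y + B x z := by
    intro x y z; rw [hsymm, hadd, hsymm y x, hsymm z x]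
  have hsmulr : ∀ (r : ℝ) (x y), B x (r • y) = r * B x y := by
    intro r x y; rw [hsymm, hsmul, hsymm]
  have hsub : ∀ x y z, B (x - y) z = B x z - B y z := by
    intro x y z
    have := hadd (x - y) y z
    simp only [sub_add_cancel] at this
    linarith
  have hsubr : ∀ x y z, B x (y - z) = B x y - B x z := by
    intro x y z; rw [hsymm, hsub, hsymm y x, hsymm z x]
  simp only [hsub, hsubr, hadd, haddr, hsmul, hsmulr]
  nlinarith [hsymm u c, hsymm u d, hsymm v c, hsymm v d, hsymm c d, hsymm u v]

lemma exists_inverse [CompleteSpace V] (G : V →L[ℝ] V)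
    (hGsa : ∀ x y, ⟪G x, y⟫_ℝ = ⟪x, G y⟫_ℝ)
    (hGco : ∀ x, ‖x‖ ^ 2 ≤ ⟪G x, x⟫_ℝ) :
    ∃ T : V →L[ℝ] V, (∀ x, G (T x) = x) ∧ (∀ x, T (G x) = x) ∧
      (∀ x y, ⟪T x, y⟫_ℝ = ⟪x, T y⟫_ℝ) ∧ (∀ x, 0 ≤ ⟪x, T x⟫_ℝ) := by
  set B : V →L[ℝ] V →L[ℝ] ℝ := (innerSL ℝ).comp G with hB
  have hBapp : ∀ x y, B x y = ⟪G x, y⟫_ℝ := fun x y => rfl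
  have hco : IsCoercive B := by
    refine ⟨1, one_pos, fun v => ?_⟩
    rw [hBapp]
    nlinarith [hGco v]
  set T : V →L[ℝ] V := (hco.continuousLinearEquivOfBilin.symm : V ≃L[ℝ] V).toContinuousLinearMap
    with hT
  have hTapp : ∀ x, T x = hco.continuousLinearEquivOfBilin.symm x := fun x => rfl
  have hTG : ∀ x, G (T x) = x := by
    intro x
    refine ext_inner_right (𝕜 := ℝ) fun w => ?_
    have h3 := hco.continuousLinearEquivOfBilin_apply (hco.continuousLinearEquivOfBilin.symm x) w
    rw [ContinuousLinearEquiv.apply_symm_apply, hBapp] at h3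
    rw [hTapp]
    exact h3.symm
  have hGT : ∀ x, T (G x) = x := by
    intro x
    have h1 : G (T (G x)) = G x := hTG (G x)
    have h2 := hGco (T (G x) - x)
    rw [map_sub, h1, sub_self] at h2
    simp only [inner_zero_left] at h2
    have h4 : ‖T (G x) - x‖ ^ 2 = 0 := le_antisymm h2 (by positivity)
    rw [sq_eq_zero_iff, norm_eq_zero] at h4
    exact sub_eq_zero.mp h4
  have hTsymm : ∀ x y, ⟪T x, y⟫_ℝ = ⟪x, T y⟫_ℝ := by
    intro x y
    conv_lhs => rw [← hTG y]
    rw [← hGsa (T x) (T y)]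
    conv_rhs => rw [← hTG x]
  have hTpos : ∀ x, 0 ≤ ⟪x, T x⟫_ℝ := by
    intro x
    have := hGco (T x)
    rw [hTG x] at this
    have h2 : ⟪x, T x⟫_ℝ = ⟪T x, x⟫_ℝ := real_inner_comm _ _
    nlinarith [sq_nonneg ‖T x‖]
  exact ⟨T, hTG, hGT, hTsymm, hTpos⟩

lemma grad_eq (A : V →L[ℝ] V) (hA : ∀ f g, ⟪A f, g⟫_ℝ = ⟪f, A g⟫_ℝ) (α : ℝ) (hα : 0 < α)
    (yd yr w pm : V)
    (hmin : ∀ q : V, (1/2)*‖A pm - yd‖^2 + (1/(2*α))*‖pm - w‖^2 + ⟪pm, yr⟫_ℝ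
      ≤ (1/2)*‖A q - yd‖^2 + (1/(2*α))*‖q - w‖^2 + ⟪q, yr⟫_ℝ) :
    A (A pm - yd) + (1/α) • (pm - w) + yr = 0 := by
  have hL0 : ∀ d : V, ⟪A pm - yd, A d⟫_ℝ + (1/(2*α))*(2*⟪pm - w, d⟫_ℝ) + ⟪d, yr⟫_ℝ = 0 := by
    intro d
    apply aux_lin_zero _ ((1/2)*‖A d‖^2 + (1/(2*α))*‖d‖^2)
    · positivity
    · intro s
      have h1 := hmin (pm + s • d)
      have e1 : A (pm + s • d) - yd = (A pm - yd) + s • (A d) := by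
        rw [map_add, ContinuousLinearMap.map_smul]; abel
      have e2 : (pm + s • d) - w = (pm - w) + s • d := by abel
      have e3 : ‖(A pm - yd) + s • (A d)‖^2
          = ‖A pm - yd‖^2 + 2*(s*⟪A pm - yd, A d⟫_ℝ) + s^2*‖A d‖^2 := by
        rw [norm_add_sq_real, real_inner_smul_right, norm_smul]
        simp [mul_pow, sq_abs, Real.norm_eq_abs]
      have e4 : ‖(pm - w) + s • d‖^2
          = ‖pm - w‖^2 + 2*(s*⟪pm - w, d⟫_ℝ) + s^2*‖d‖^2 := by
        rw [norm_add_sq_real, real_inner_smul_right, norm_smul]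
        simp [mul_pow, sq_abs, Real.norm_eq_abs]
      have e5 : ⟪pm + s • d, yr⟫_ℝ = ⟪pm, yr⟫_ℝ + s*⟪d, yr⟫_ℝ := by
        rw [inner_add_left, real_inner_smul_left]
      rw [e1, e2, e3, e4, e5] at h1
      nlinarith [h1]
  have hc : ∀ X : ℝ, 1/(2*α)*(2*X) = (1/α)*X := by intro X; ring
  have hL : ∀ d : V, ⟪A pm - yd, A d⟫_ℝ + (1/α)*⟪pm - w, d⟫_ℝ + ⟪d, yr⟫_ℝ = 0 := by
    intro d
    have := hL0 d
    rw [hc] at this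
    exact this
  have hvec : ∀ d : V, ⟪A (A pm - yd) + (1/α) • (pm - w) + yr, d⟫_ℝ = 0 := by
    intro d
    rw [inner_add_left, inner_add_left, real_inner_smul_left]
    have := hL d
    rw [← hA (A pm - yd) d] at this
    linarith [this, real_inner_comm yr d]
  exact inner_self_eq_zero.mp (hvec (A (A pm - yd) + (1/α) • (pm - w) + yr))

lemma p_expansion (A : V →L[ℝ] V) (hA : ∀ f g, ⟪A f, g⟫_ℝ = ⟪f, A g⟫_ℝ) (α : ℝ)
    (yd yr w pm : V) (hGE : A (A pm - yd) + (1/α) • (pm - w) + yr = 0) (u s : V) :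
    (1/2)*‖A (pm + u) - yd‖^2 + (1/(2*α))*‖(pm + u) - (w + s)‖^2 + ⟪pm + u, yr⟫_ℝ
      = (1/2)*‖A pm - yd‖^2 + (1/(2*α))*‖pm - w‖^2 + ⟪pm, yr⟫_ℝ
        + (1/2)*‖A u‖^2 + (1/(2*α))*‖u - s‖^2 - (1/α)*⟪pm - w, s⟫_ℝ := by
  have e1 : A (pm + u) - yd = (A pm - yd) + A u := by rw [map_add]; abel
  have e2 : (pm + u) - (w + s) = (pm - w) + (u - s) := by abel
  rw [e1, e2, norm_add_sq_real (A pm - yd) (A u), norm_add_sq_real (pm - w) (u - s),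
    inner_add_left pm u yr, inner_sub_right (𝕜 := ℝ) (pm - w) u s,
    norm_sub_sq_real u s]
  have hz := congrArg (fun v => ⟪v, u⟫_ℝ) hGE
  simp only [inner_add_left, real_inner_smul_left, inner_zero_left] at hz
  have hz2 : ⟪A (A pm - yd), u⟫_ℝ = ⟪A pm - yd, A u⟫_ℝ := hA _ _
  have hyru : ⟪u, yr⟫_ℝ = ⟪yr, u⟫_ℝ := real_inner_comm _ _
  linear_combination hz - hz2 + hyru

lemma key_step (A : V →L[ℝ] V) (hA : ∀ f g, ⟪A f, g⟫_ℝ = ⟪f, A g⟫_ℝ)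
    (α : ℝ) (hα : 0 < α) (yd yr : V) (σ : V → ℝ) (Bb : Set V) (T : V →L[ℝ] V)
    (hTsymm : ∀ x y, ⟪T x, y⟫_ℝ = ⟪x, T y⟫_ℝ) (hTpos : ∀ x, 0 ≤ ⟪x, T x⟫_ℝ)
    (lamE muE lamk pk phk muk : V)
    (hGE : A (A pk - yd) + (1/α) • (pk - (lamk + muE)) + yr = 0)
    (hdelta : T (lamk - lamE) = pk - phk)
    (hVIl : ∀ l ∈ Bb, 0 ≤ ⟪lamk - phk + muE, l - lamk⟫_ℝ)
    (hVIm : ∀ m : V, 0 ≤ (1/α) * ⟪muk - (pk - lamk), m - muk⟫_ℝ + σ m - σ muk) :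
    ∀ l ∈ Bb, ∀ q m : V,
      ((1/2)*‖A pk - yd‖^2 + (1/(2*α))*‖pk - lamk - muk‖^2 + ⟪pk, yr⟫_ℝ + σ muk)
        + (1/(2*α))*⟪lamk - l, T (lamk - l)⟫_ℝ + (1/(2*α))*‖muk - m‖^2
      ≤ ((1/2)*‖A q - yd‖^2 + (1/(2*α))*‖q - l - m‖^2 + ⟪q, yr⟫_ℝ + σ m)
        + (1/(2*α))*⟪lamE - l, T (lamE - l)⟫_ℝ + (1/(2*α))*‖muE - m‖^2 := by
  intro l hl q m
  have E1 := p_expansion A hA α yd yr (lamk + muE) pk hGE (q - pk) (l - lamk)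
  rw [show pk + (q - pk) = q by abel] at E1
  rw [show (lamk + muE) + (l - lamk) = l + muE by abel] at E1
  have E2 : ‖q - l - m‖^2 = ‖q - (l + muE)‖^2
      - 2*⟪q - (l + muE), m - muE⟫_ℝ + ‖m - muE‖^2 := by
    rw [show q - l - m = (q - (l + muE)) - (m - muE) by abel, norm_sub_sq_real]
  have E3 : ‖pk - lamk - m‖^2 = ‖pk - (lamk + muE)‖^2
      - 2*⟪pk - (lamk + muE), m - muE⟫_ℝ + ‖m - muE‖^2 := by
    rw [show pk - lamk - m = (pk - (lamk + muE)) - (m - muE) by abel, norm_sub_sq_real]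
  have E4 : ‖pk - lamk - m‖^2 = ‖pk - lamk - muk‖^2
      + 2*⟪pk - lamk - muk, muk - m⟫_ℝ + ‖muk - m‖^2 := by
    rw [show pk - lamk - m = (pk - lamk - muk) + (muk - m) by abel, norm_add_sq_real]
  have E5 : ⟪lamE - l, T (lamE - l)⟫_ℝ = ⟪lamk - l, T (lamk - l)⟫_ℝ
      - 2*⟪lamk - l, T (lamk - lamE)⟫_ℝ + ⟪lamk - lamE, T (lamk - lamE)⟫_ℝ := by
    rw [show lamE - l = (lamk - l) - (lamk - lamE) by abel, map_sub, inner_sub_left,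
      inner_sub_right, inner_sub_right]
    have hsw : ⟪lamk - lamE, T (lamk - l)⟫_ℝ = ⟪lamk - l, T (lamk - lamE)⟫_ℝ := by
      rw [← hTsymm, real_inner_comm]
    linear_combination -hsw
  rw [hdelta] at E5
  have BR1 : ⟪lamk - phk + muE, l - lamk⟫_ℝ
      = ⟪pk - phk, l - lamk⟫_ℝ - ⟪pk - (lamk + muE), l - lamk⟫_ℝ := by
    rw [show lamk - phk + muE = (pk - phk) - (pk - (lamk + muE)) by abel, inner_sub_left]
  have BR2 : ⟪lamk - l, pk - phk⟫_ℝ = -⟪pk - phk, l - lamk⟫_ℝ := by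
    rw [show lamk - l = -(l - lamk) by abel, inner_neg_left, real_inner_comm]
  have BRa : ⟪q - (l + muE), m - muE⟫_ℝ = ⟪pk - (lamk + muE), m - muE⟫_ℝ
      + ⟪(q - pk) - (l - lamk), m - muE⟫_ℝ := by
    rw [show q - (l + muE) = (pk - (lamk + muE)) + ((q - pk) - (l - lamk)) by abel,
      inner_add_left]
  have BR3 : ⟪muk - (pk - lamk), m - muk⟫_ℝ = ⟪pk - lamk - muk, muk - m⟫_ℝ := by
    rw [show muk - (pk - lamk) = -(pk - lamk - muk) by abel,
      show m - muk = -(muk - m) by abel, inner_neg_neg]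
  have N2e : ‖((q - pk) - (l - lamk)) - (m - muE)‖^2 = ‖(q - pk) - (l - lamk)‖^2
      - 2*⟪(q - pk) - (l - lamk), m - muE⟫_ℝ + ‖m - muE‖^2 := norm_sub_sq_real _ _
  have N2 : (0:ℝ) ≤ ‖((q - pk) - (l - lamk)) - (m - muE)‖^2 := by positivity
  have N1 : (0:ℝ) ≤ ‖A (q - pk)‖^2 := by positivity
  have E6 := hTpos (lamk - lamE)
  rw [hdelta] at E6
  have E7 : ‖muE - m‖^2 = ‖m - muE‖^2 := by rw [norm_sub_rev]
  have V1 := hVIl l hl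
  have V2 := hVIm m
  rw [BR3] at V2
  rw [BR1] at V1
  have hc : (0:ℝ) < 1/(2*α) := by positivity
  have E2' := congrArg (fun x => (1/(2*α)) * x) E2
  have E3' := congrArg (fun x => (1/(2*α)) * x) E3
  have E4' := congrArg (fun x => (1/(2*α)) * x) E4
  have E5' := congrArg (fun x => (1/(2*α)) * x) E5
  have BR2' := congrArg (fun x => (1/(2*α)) * x) BR2
  have BRa' := congrArg (fun x => (1/(2*α)) * x) BRa
  have N2e' := congrArg (fun x => (1/(2*α)) * x) N2e
  have E7' := congrArg (fun x => (1/(2*α)) * x) E7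
  have hαconv : (1:ℝ)/α = 2*(1/(2*α)) := by field_simp
  rw [hαconv] at E1 V2
  have V1' := mul_le_mul_of_nonneg_left V1 hc.le
  have N2' := mul_le_mul_of_nonneg_left N2 hc.le
  have E6' := mul_le_mul_of_nonneg_left E6 hc.le
  linarith [E1, E2', E3', E4', E5', BR2', BRa', N2e', N2', N1, E6', E7', V1', V2]

end AuxiliaryLemmas

set_option maxHeartbeats 2000000 in
/-- The `O(1/k²)` convergence theorem for the sGS-based majorized ABCD algorithm applied
to the dual of the sparse elliptic optimal-control problem in `L²(Ω)`. -/
theorem sGS_mABCD_convergence_L2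
    {Ω : Type*} [MeasurableSpace Ω] (ν : Measure Ω) [IsFiniteMeasure ν]
    (A : Lp ℝ 2 ν →L[ℝ] Lp ℝ 2 ν)
    (hA : ∀ f g : Lp ℝ 2 ν, ⟪A f, g⟫_ℝ = ⟪f, A g⟫_ℝ)
    (α β a b : ℝ) (hα : 0 < α) (hβ : 0 < β) (ha : a ≤ 0) (hb : 0 ≤ b)
    (yd yr : Lp ℝ 2 ν)
    -- the box `B_β`
    (Bβ : Set (Lp ℝ 2 ν)) (hBβ : Bβ = {l : Lp ℝ 2 ν | ∀ᵐ x ∂ν, |l x| ≤ β})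
    -- iterates and extrapolated points
    (lam p mu phat lamE pE muE : ℕ → Lp ℝ 2 ν) (t : ℕ → ℝ)
    (ht1 : t 1 = 1)
    (htrec : ∀ k ≥ 1, t (k + 1) = (1 + Real.sqrt (1 + 4 * t k ^ 2)) / 2)
    (hinit : lamE 1 = lam 0 ∧ pE 1 = p 0 ∧ muE 1 = mu 0 ∧ lam 0 ∈ Bβ)
    (hphat : ∀ k ≥ 1, ∀ q : Lp ℝ 2 ν,
      (1 / 2) * ‖A (phat k) - yd‖ ^ 2 + (1 / (2 * α)) * ‖phat k - lamE k - muE k‖ ^ 2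
          + ⟪phat k, yr⟫_ℝ
        ≤ (1 / 2) * ‖A q - yd‖ ^ 2 + (1 / (2 * α)) * ‖q - lamE k - muE k‖ ^ 2 + ⟪q, yr⟫_ℝ)
    (hlam : ∀ k ≥ 1, lam k ∈ Bβ ∧ ∀ l ∈ Bβ,
      (1 / (2 * α)) * ‖lam k - (phat k - muE k)‖ ^ 2
        ≤ (1 / (2 * α)) * ‖l - (phat k - muE k)‖ ^ 2)
    (hp : ∀ k ≥ 1, ∀ q : Lp ℝ 2 ν,
      (1 / 2) * ‖A (p k) - yd‖ ^ 2 + (1 / (2 * α)) * ‖p k - lam k - muE k‖ ^ 2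
          + ⟪p k, yr⟫_ℝ
        ≤ (1 / 2) * ‖A q - yd‖ ^ 2 + (1 / (2 * α)) * ‖q - lam k - muE k‖ ^ 2 + ⟪q, yr⟫_ℝ)
    (hmu : ∀ k ≥ 1, ∀ m : Lp ℝ 2 ν,
      (1 / (2 * α)) * ‖mu k - (p k - lam k)‖ ^ 2 + (∫ x, max (a * mu k x) (b * mu k x) ∂ν)
        ≤ (1 / (2 * α)) * ‖m - (p k - lam k)‖ ^ 2 + ∫ x, max (a * m x) (b * m x) ∂ν)
    (hextr : ∀ k ≥ 1,
      lamE (k + 1) = lam k + ((t k - 1) / t (k + 1)) • (lam k - lam (k - 1)) ∧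
      pE (k + 1) = p k + ((t k - 1) / t (k + 1)) • (p k - p (k - 1)) ∧
      muE (k + 1) = mu k + ((t k - 1) / t (k + 1)) • (mu k - mu (k - 1)))
    -- a minimizer of Φ
    (lams ps mus : Lp ℝ 2 ν) (hlams : lams ∈ Bβ)
    (hmin : ∀ l ∈ Bβ, ∀ q m : Lp ℝ 2 ν,
      dualObj ν A α a b yd yr lams ps mus ≤ dualObj ν A α a b yd yr l q m)
    -- `qv = (α A² + I)⁻¹ (λ* − λ⁰)`
    (qv : Lp ℝ 2 ν) (hqv : α • A (A qv) + qv = lams - lam 0) :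
    ∀ k ≥ 1,
      dualObj ν A α a b yd yr (lam k) (p k) (mu k)
          - dualObj ν A α a b yd yr lams ps mus
        ≤ 4 * ((1 / (2 * α)) * ⟪lams - lam 0, qv⟫_ℝ
              + (1 / (2 * α)) * ‖mus - mu 0‖ ^ 2) / ((k : ℝ) + 1) ^ 2 := by
  obtain ⟨hinitl, hinitp, hinitm, hlam0⟩ := hinit
  -- integrability of the sparsity integrand
  have hInt : ∀ w : Lp ℝ 2 ν, Integrable (fun x => max (a * w x) (b * w x)) ν := by
    intro w
    have hw1 : MemLp (w : Ω → ℝ) 1 ν := (Lp.memLp w).mono_exponent (by norm_num)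
    have hwi : Integrable (w : Ω → ℝ) ν := memLp_one_iff_integrable.mp hw1
    have h1 : Integrable (fun x => a * w x) ν := hwi.const_mul a
    have h2 : Integrable (fun x => b * w x) ν := hwi.const_mul b
    exact h1.sup h2
  -- convexity of the sparsity term
  have hσconv : ∀ (u v : Lp ℝ 2 ν) (s : ℝ), 0 ≤ s → s ≤ 1 →
      (∫ x, max (a * (u + s • (v - u)) x) (b * ((u + s • (v - u)) x)) ∂ν)
        ≤ (1 - s) * (∫ x, max (a * u x) (b * u x) ∂ν)
          + s * (∫ x, max (a * v x) (b * v x) ∂ν) := by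
    intro u v s hs0 hs1
    have hcoe : (fun x => max (a * (u + s • (v - u)) x) (b * ((u + s • (v - u)) x)))
        =ᵐ[ν] (fun x => max (a * (u x + s * (v x - u x))) (b * (u x + s * (v x - u x)))) := by
      filter_upwards [Lp.coeFn_add u (s • (v - u)), Lp.coeFn_smul s (v - u),
        Lp.coeFn_sub v u] with x h1 h2 h3
      have hx : (u + s • (v - u)) x = u x + s * (v x - u x) := by
        rw [h1, Pi.add_apply, h2, Pi.smul_apply, h3, Pi.sub_apply, smul_eq_mul]
      rw [hx]
    rw [integral_congr_ae hcoe]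
    have hint1 : Integrable (fun x => max (a * (u x + s * (v x - u x)))
        (b * (u x + s * (v x - u x)))) ν := (hInt (u + s • (v - u))).congr hcoe
    have hint2 : Integrable (fun x => (1 - s) * max (a * u x) (b * u x)
        + s * max (a * v x) (b * v x)) ν :=
      ((hInt u).const_mul (1 - s)).add ((hInt v).const_mul s)
    have hmono : (∫ x, max (a * (u x + s * (v x - u x))) (b * (u x + s * (v x - u x))) ∂ν)
        ≤ ∫ x, ((1 - s) * max (a * u x) (b * u x) + s * max (a * v x) (b * v x)) ∂ν := by
      apply integral_mono hint1 hint2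
      intro x
      dsimp only
      have hs' : (0:ℝ) ≤ 1 - s := by linarith
      have cL1 := mul_le_mul_of_nonneg_left (le_max_left (a * u x) (b * u x)) hs'
      have cL2 := mul_le_mul_of_nonneg_left (le_max_left (a * v x) (b * v x)) hs0
      have cR1 := mul_le_mul_of_nonneg_left (le_max_right (a * u x) (b * u x)) hs'
      have cR2 := mul_le_mul_of_nonneg_left (le_max_right (a * v x) (b * v x)) hs0
      apply max_le
      · nlinarith [cL1, cL2]
      · nlinarith [cR1, cR2]
    calc (∫ x, max (a * (u x + s * (v x - u x))) (b * (u x + s * (v x - u x))) ∂ν)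
        ≤ ∫ x, ((1 - s) * max (a * u x) (b * u x) + s * max (a * v x) (b * v x)) ∂ν := hmono
      _ = (1 - s) * (∫ x, max (a * u x) (b * u x) ∂ν)
            + s * (∫ x, max (a * v x) (b * v x) ∂ν) := by
          rw [integral_add ((hInt u).const_mul (1 - s)) ((hInt v).const_mul s),
            integral_const_mul, integral_const_mul]
  -- convexity of the box
  have hBconv : ∀ u ∈ Bβ, ∀ v ∈ Bβ, ∀ s : ℝ, 0 ≤ s → s ≤ 1 → u + s • (v - u) ∈ Bβ := by
    intro u hu v hv s hs0 hs1
    rw [hBβ] at hu hv ⊢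
    simp only [Set.mem_setOf_eq] at hu hv ⊢
    filter_upwards [hu, hv, Lp.coeFn_add u (s • (v - u)), Lp.coeFn_smul s (v - u),
      Lp.coeFn_sub v u] with x h1 h2 h3 h4 h5
    have hx : (u + s • (v - u)) x = u x + s * (v x - u x) := by
      rw [h3, Pi.add_apply, h4, Pi.smul_apply, h5, Pi.sub_apply, smul_eq_mul]
    rw [hx]
    have habs : |u x + s * (v x - u x)| ≤ (1 - s) * |u x| + s * |v x| := by
      have h6 : u x + s * (v x - u x) = (1 - s) * u x + s * v x := by ring
      rw [h6]
      calc |(1 - s) * u x + s * v x| ≤ |(1 - s) * u x| + |s * v x| := abs_add_le _ _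
        _ = (1 - s) * |u x| + s * |v x| := by
            rw [abs_mul, abs_mul, abs_of_nonneg (by linarith), abs_of_nonneg hs0]
    nlinarith [abs_nonneg (u x), abs_nonneg (v x)]
  -- the operator G = α A² + I and its inverse T
  set G : Lp ℝ 2 ν →L[ℝ] Lp ℝ 2 ν := α • (A.comp A) + ContinuousLinearMap.id ℝ _ with hGdef
  have hGapp : ∀ x, G x = α • A (A x) + x := by
    intro x
    simp [hGdef, ContinuousLinearMap.add_apply, ContinuousLinearMap.smul_apply,
      ContinuousLinearMap.comp_apply, ContinuousLinearMap.id_apply]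
  have hGsa : ∀ x y, ⟪G x, y⟫_ℝ = ⟪x, G y⟫_ℝ := by
    intro x y
    rw [hGapp, hGapp, inner_add_left, inner_add_right, real_inner_smul_left,
      real_inner_smul_right]
    have h1 : ⟪A (A x), y⟫_ℝ = ⟪A x, A y⟫_ℝ := hA _ _
    have h2 : ⟪x, A (A y)⟫_ℝ = ⟪A x, A y⟫_ℝ := (hA x (A y)).symm
    rw [h1, h2]
  have hGco : ∀ x, ‖x‖ ^ 2 ≤ ⟪G x, x⟫_ℝ := by
    intro x
    rw [hGapp, inner_add_left, real_inner_smul_left, hA (A x) x]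
    have h1 : ⟪A x, A x⟫_ℝ = ‖A x‖ ^ 2 := real_inner_self_eq_norm_sq _
    have h2 : ⟪x, x⟫_ℝ = ‖x‖ ^ 2 := real_inner_self_eq_norm_sq _
    nlinarith [sq_nonneg ‖A x‖]
  obtain ⟨T, hTG, hGT, hTsymm, hTpos⟩ := exists_inverse G hGsa hGco
  have hqvT : T (lams - lam 0) = qv := by
    have h1 : G qv = lams - lam 0 := by rw [hGapp]; exact hqv
    rw [← h1, hGT]
  -- gradient equations for the p-updates
  have hGEp : ∀ k, 1 ≤ k → A (A (p k) - yd) + (1/α) • (p k - (lam k + muE k)) + yr = 0 := by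
    intro k hk
    apply grad_eq A hA α hα yd yr (lam k + muE k) (p k)
    intro q'
    have := hp k hk q'
    simpa only [sub_sub] using this
  have hGEphat : ∀ k, 1 ≤ k →
      A (A (phat k) - yd) + (1/α) • (phat k - (lamE k + muE k)) + yr = 0 := by
    intro k hk
    apply grad_eq A hA α hα yd yr (lamE k + muE k) (phat k)
    intro q'
    have := hphat k hk q'
    simpa only [sub_sub] using this
  have hdelta : ∀ k, 1 ≤ k → T (lam k - lamE k) = p k - phat k := by
    intro k hk
    have h5 : A (A (p k - phat k)) + (1/α) • ((p k - phat k) - (lam k - lamE k)) = 0 := by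
      have e : A (A (p k - phat k)) + (1/α) • ((p k - phat k) - (lam k - lamE k))
          = (A (A (p k) - yd) + (1/α) • (p k - (lam k + muE k)) + yr)
            - (A (A (phat k) - yd) + (1/α) • (phat k - (lamE k + muE k)) + yr) := by
        simp only [map_sub, smul_sub, smul_add]
        abel
      rw [e, hGEp k hk, hGEphat k hk, sub_zero]
    have h8 : α • (A (A (p k - phat k)) + (1/α) • ((p k - phat k) - (lam k - lamE k)))
        = α • A (A (p k - phat k)) + ((p k - phat k) - (lam k - lamE k)) := by
      rw [smul_add, smul_smul, mul_one_div, div_self hα.ne', one_smul]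
    have h9 : α • A (A (p k - phat k)) + ((p k - phat k) - (lam k - lamE k)) = 0 := by
      rw [← h8, h5, smul_zero]
    have h3 : G (p k - phat k) = lam k - lamE k := by
      rw [hGapp, ← sub_eq_zero, add_sub_assoc]
      exact h9
    rw [← h3, hGT]
  -- variational inequality for the λ-update
  have hVIl : ∀ k, 1 ≤ k → ∀ l ∈ Bβ,
      0 ≤ ⟪lam k - phat k + muE k, l - lam k⟫_ℝ := by
    intro k hk l hl
    have hstep : ∀ s : ℝ, 0 < s → s ≤ 1 →
        0 ≤ 2 * ⟪lam k - (phat k - muE k), l - lam k⟫_ℝ + s * ‖l - lam k‖^2 := by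
      intro s hs0 hs1
      have hls : lam k + s • (l - lam k) ∈ Bβ := hBconv _ (hlam k hk).1 _ hl s hs0.le hs1
      have h1 := (hlam k hk).2 _ hls
      have e1 : lam k + s • (l - lam k) - (phat k - muE k)
          = (lam k - (phat k - muE k)) + s • (l - lam k) := by abel
      rw [e1, norm_add_sq_real, real_inner_smul_right] at h1
      have e2 : ‖s • (l - lam k)‖^2 = s^2 * ‖l - lam k‖^2 := by
        rw [norm_smul]; simp [mul_pow, sq_abs, Real.norm_eq_abs]
      rw [e2] at h1
      have hc : (0:ℝ) < 1/(2*α) := by positivity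
      have h2 := (mul_le_mul_iff_right₀ hc).mp h1
      have h3 : 0 ≤ s * (2 * ⟪lam k - (phat k - muE k), l - lam k⟫_ℝ
          + s * ‖l - lam k‖^2) := by nlinarith [h2]
      by_contra hcon
      push_neg at hcon
      nlinarith [h3]
    have h5 := aux_seg_zero _ _ (by positivity) hstep
    have e3 : lam k - (phat k - muE k) = lam k - phat k + muE k := by abel
    rw [e3] at h5
    linarith
  -- variational inequality for the μ-update
  have hVIm : ∀ k, 1 ≤ k → ∀ m : Lp ℝ 2 ν,
      0 ≤ (1/α) * ⟪mu k - (p k - lam k), m - mu k⟫_ℝ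
        + (∫ x, max (a * m x) (b * m x) ∂ν)
        - (∫ x, max (a * mu k x) (b * mu k x) ∂ν) := by
    intro k hk m
    have hstep : ∀ s : ℝ, 0 < s → s ≤ 1 →
        0 ≤ ((1/α) * ⟪mu k - (p k - lam k), m - mu k⟫_ℝ
          + (∫ x, max (a * m x) (b * m x) ∂ν)
          - (∫ x, max (a * mu k x) (b * mu k x) ∂ν))
          + s * ((1/(2*α)) * ‖m - mu k‖^2) := by
      intro s hs0 hs1
      have h1 := hmu k hk (mu k + s • (m - mu k))
      have hσ := hσconv (mu k) m s hs0.le hs1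
      have e1 : mu k + s • (m - mu k) - (p k - lam k)
          = (mu k - (p k - lam k)) + s • (m - mu k) := by abel
      rw [e1, norm_add_sq_real, real_inner_smul_right] at h1
      have e2 : ‖s • (m - mu k)‖^2 = s^2 * ‖m - mu k‖^2 := by
        rw [norm_smul]; simp [mul_pow, sq_abs, Real.norm_eq_abs]
      rw [e2] at h1
      have hαconv : (1:ℝ)/α = 2*(1/(2*α)) := by field_simp
      rw [hαconv]
      have h3 : 0 ≤ s * ((2*(1/(2*α))) * ⟪mu k - (p k - lam k), m - mu k⟫_ℝ
          + (∫ x, max (a * m x) (b * m x) ∂ν)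
          - (∫ x, max (a * mu k x) (b * mu k x) ∂ν)
          + s * ((1/(2*α)) * ‖m - mu k‖^2)) := by nlinarith [h1, hσ]
      by_contra hcon
      push_neg at hcon
      nlinarith [h3]
    have h5 := aux_seg_zero _ _ (by positivity) hstep
    linarith
  -- the one-iteration inequality
  have KEY : ∀ k, 1 ≤ k → ∀ l ∈ Bβ, ∀ q' m : Lp ℝ 2 ν,
      dualObj ν A α a b yd yr (lam k) (p k) (mu k)
        + (1/(2*α)) * ⟪lam k - l, T (lam k - l)⟫_ℝ + (1/(2*α)) * ‖mu k - m‖^2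
      ≤ dualObj ν A α a b yd yr l q' m
        + (1/(2*α)) * ⟪lamE k - l, T (lamE k - l)⟫_ℝ + (1/(2*α)) * ‖muE k - m‖^2 := by
    intro k hk l hl q' m
    have hks := key_step A hA α hα yd yr (fun w => ∫ x, max (a * w x) (b * w x) ∂ν) Bβ T
      hTsymm hTpos (lamE k) (muE k) (lam k) (p k) (phat k) (mu k)
      (hGEp k hk) (hdelta k hk) (hVIl k hk) (hVIm k hk) l hl q' m
    simp only [dualObj]
    linarith [hks]
  -- properties of the t-sequence
  have htge : ∀ k : ℕ, 1 ≤ k → ((k:ℝ) + 1)/2 ≤ t k := by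
    intro k hk
    induction k, hk using Nat.le_induction with
    | base => rw [ht1]; norm_num
    | succ n hn ih =>
      have hn1 : (1:ℝ) ≤ t n := by
        have hcast : (1:ℝ) ≤ (n:ℝ) := by exact_mod_cast hn
        linarith
      rw [htrec n hn]
      have h1 : 2 * t n ≤ Real.sqrt (1 + 4 * t n ^ 2) := by
        rw [show (2 * t n) = Real.sqrt ((2 * t n)^2) from (Real.sqrt_sq (by linarith)).symm]
        apply Real.sqrt_le_sqrt
        nlinarith
      push_cast
      linarith
  have htpos : ∀ k, 1 ≤ k → 1 ≤ t k := by
    intro k hk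
    have h1 := htge k hk
    have hcast : (1:ℝ) ≤ (k:ℝ) := by exact_mod_cast hk
    linarith
  have htsq : ∀ k, 1 ≤ k → t (k+1)^2 - t (k+1) = t k ^ 2 := by
    intro k hk
    rw [htrec k hk]
    have h0 : (0:ℝ) ≤ 1 + 4 * t k ^ 2 := by positivity
    have hs := Real.sq_sqrt h0
    nlinarith [hs]
  -- the FISTA Lyapunov induction
  have hElarge : ∀ k, 1 ≤ k →
      t k ^ 2 * (dualObj ν A α a b yd yr (lam k) (p k) (mu k)
          - dualObj ν A α a b yd yr lams ps mus)
        + (1/(2*α)) * ⟪t k • lam k - (t k - 1) • lam (k-1) - lams,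
            T (t k • lam k - (t k - 1) • lam (k-1) - lams)⟫_ℝ
        + (1/(2*α)) * ‖t k • mu k - (t k - 1) • mu (k-1) - mus‖^2
      ≤ (1/(2*α)) * ⟪lams - lam 0, qv⟫_ℝ + (1/(2*α)) * ‖mus - mu 0‖^2 := by
    intro k hk
    induction k, hk using Nat.le_induction with
    | base =>
      have hK := KEY 1 le_rfl lams hlams ps mus
      rw [hinitl, hinitm] at hK
      have hb : ⟪lam 0 - lams, T (lam 0 - lams)⟫_ℝ = ⟪lams - lam 0, qv⟫_ℝ := by
        rw [show lam 0 - lams = -(lams - lam 0) by abel, map_neg, inner_neg_neg, hqvT]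
      have hb2 : ‖mu 0 - mus‖^2 = ‖mus - mu 0‖^2 := by rw [norm_sub_rev]
      rw [hb, hb2] at hK
      rw [ht1]
      simp only [Nat.sub_self, one_pow, one_mul, sub_self, zero_smul, one_smul, sub_zero]
      linarith [hK]
    | succ n hn ih =>
      have hn1 : 1 ≤ n + 1 := Nat.le_add_left 1 n
      have hKa := KEY (n+1) hn1 (lam n) (hlam n hn).1 (p n) (mu n)
      have hKb := KEY (n+1) hn1 lams hlams ps mus
      have ht' := htpos (n+1) hn1
      have htn := htpos n hn
      have ht'0 : t (n+1) ≠ 0 := by linarith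
      have hEs : t (n+1) • lamE (n+1)
          = t (n+1) • lam n + (t n - 1) • (lam n - lam (n-1)) := by
        rw [(hextr n hn).1, smul_add, smul_smul, mul_comm, div_mul_cancel₀ _ ht'0]
      have hmEs : t (n+1) • muE (n+1)
          = t (n+1) • mu n + (t n - 1) • (mu n - mu (n-1)) := by
        rw [(hextr n hn).2.2, smul_add, smul_smul, mul_comm, div_mul_cancel₀ _ ht'0]
      have qidphi := quad_id (V := Lp ℝ 2 ν) (fun x y => (1/(2*α)) * ⟪x, T y⟫_ℝ)
        (by intro x y z; rw [inner_add_left]; ring)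
        (by intro c x y; rw [real_inner_smul_left]; ring)
        (by intro x y; rw [← hTsymm, real_inner_comm])
        (t (n+1)) (lamE (n+1)) (lam (n+1)) (lam n) lams
      have qidn := quad_id (V := Lp ℝ 2 ν) (fun x y => (1/(2*α)) * ⟪x, y⟫_ℝ)
        (by intro x y z; rw [inner_add_left]; ring)
        (by intro c x y; rw [real_inner_smul_left]; ring)
        (by intro x y; rw [real_inner_comm])
        (t (n+1)) (muE (n+1)) (mu (n+1)) (mu n) mus
      simp only [real_inner_self_eq_norm_sq] at qidn
      have hv1 : t (n+1) • lamE (n+1) - ((t (n+1) - 1) • lam n + lams)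
          = t n • lam n - (t n - 1) • lam (n-1) - lams := by
        rw [hEs]; module
      have hv2 : t (n+1) • lam (n+1) - ((t (n+1) - 1) • lam n + lams)
          = t (n+1) • lam (n+1) - (t (n+1) - 1) • lam (n+1-1) - lams := by
        rw [Nat.add_sub_cancel]; module
      have hmv1 : t (n+1) • muE (n+1) - ((t (n+1) - 1) • mu n + mus)
          = t n • mu n - (t n - 1) • mu (n-1) - mus := by
        rw [hmEs]; module
      have hmv2 : t (n+1) • mu (n+1) - ((t (n+1) - 1) • mu n + mus)
          = t (n+1) • mu (n+1) - (t (n+1) - 1) • mu (n+1-1) - mus := by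
        rw [Nat.add_sub_cancel]; module
      rw [hv1, hv2] at qidphi
      rw [hmv1, hmv2] at qidn
      have hc2 : (0:ℝ) ≤ t (n+1) - 1 := by linarith
      have hmul1 := mul_le_mul_of_nonneg_left hKa hc2
      have hmul2 := add_le_add hmul1 hKb
      have hmul3 := mul_le_mul_of_nonneg_left hmul2 (by linarith : (0:ℝ) ≤ t (n+1))
      have htsqn := htsq n hn
      have htsqv : (t (n+1)^2 - t (n+1))
            * (dualObj ν A α a b yd yr (lam n) (p n) (mu n)
              - dualObj ν A α a b yd yr lams ps mus)
          = t n ^ 2 * (dualObj ν A α a b yd yr (lam n) (p n) (mu n)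
              - dualObj ν A α a b yd yr lams ps mus) := by
        rw [htsqn]
      nlinarith [hmul3, qidphi, qidn, htsqv, ih]
  -- conclusion
  intro k hk
  have hE := hElarge k hk
  have hv0 : 0 ≤ dualObj ν A α a b yd yr (lam k) (p k) (mu k)
      - dualObj ν A α a b yd yr lams ps mus := by
    linarith [hmin (lam k) (hlam k hk).1 (p k) (mu k)]
  have hφ0 : 0 ≤ (1/(2*α)) * ⟪t k • lam k - (t k - 1) • lam (k-1) - lams,
      T (t k • lam k - (t k - 1) • lam (k-1) - lams)⟫_ℝ :=
    mul_nonneg (by positivity) (hTpos _)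
  have hn0 : 0 ≤ (1/(2*α)) * ‖t k • mu k - (t k - 1) • mu (k-1) - mus‖^2 := by positivity
  have htk := htge k hk
  have hkpos : (0:ℝ) < ((k:ℝ) + 1)^2 := by positivity
  rw [le_div_iff₀ hkpos]
  have h2 : t k ^ 2 * (dualObj ν A α a b yd yr (lam k) (p k) (mu k)
      - dualObj ν A α a b yd yr lams ps mus)
      ≤ (1/(2*α)) * ⟪lams - lam 0, qv⟫_ℝ + (1/(2*α)) * ‖mus - mu 0‖^2 := by
    linarith [hE, hφ0, hn0]
  have hkc : (0:ℝ) ≤ (k:ℝ) + 1 := by positivity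
  have h3 : (((k:ℝ) + 1)^2)/4 ≤ t k ^ 2 := by nlinarith [htk, hkc]
  have h4 := mul_le_mul_of_nonneg_left h3 hv0
  nlinarith [h2, h4]
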